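/- Let g : (0, ∞) → ℂ be continuously differentiable with ‖g‖² := ∫_{0}^{∞} |g(t)|² dt/t < ∞ and M² := ∫_{0}^{∞} |t g′(t)|² dt/t < ∞. Then for every ε ∈ (0,1) there is a constant C_ε > 0 (independent of g) such that for all y > 0: 2 |g(y)| ≤ ‖g‖ + C_ε · M · max(y^{ε}, y^{−ε}). -/

import Mathlib

open MeasureTheory Set

/-- Key estimate: `‖g y‖² ≤ l·A + B/l` for every `l > 0`. -/
lemma stmt15_aux (g : ℝ → ℂ) (hg : ContDiffOn ℝ 1 g (Set.Ioi 0))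
    (hA : IntegrableOn (fun t : ℝ => ‖g t‖ ^ 2 / t) (Set.Ioi 0))
    (hB : IntegrableOn (fun t : ℝ => ‖(t : ℂ) * deriv g t‖ ^ 2 / t) (Set.Ioi 0))
    (y : ℝ) (hy : 0 < y) (l : ℝ) (hl : 0 < l) :
    ‖g y‖ ^ 2 ≤ l * (∫ t in Set.Ioi (0 : ℝ), ‖g t‖ ^ 2 / t) +
      (∫ t in Set.Ioi (0 : ℝ), ‖(t : ℂ) * deriv g t‖ ^ 2 / t) / l := by
  set A := ∫ t in Set.Ioi (0 : ℝ), ‖g t‖ ^ 2 / t with hAdef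
  set B := ∫ t in Set.Ioi (0 : ℝ), ‖(t : ℂ) * deriv g t‖ ^ 2 / t with hBdef
  set ψ : ℝ → ℝ := fun t => l * (‖g t‖ ^ 2 / t) + (1 / l) * (‖(t : ℂ) * deriv g t‖ ^ 2 / t)
    with hψdef
  have hψint : IntegrableOn ψ (Set.Ioi 0) := (hA.const_mul l).add (hB.const_mul (1 / l))
  have hψval : ∫ t in Set.Ioi (0 : ℝ), ψ t = l * A + B / l := by
    rw [hψdef, integral_add (hA.const_mul l) (hB.const_mul (1 / l)), integral_const_mul,
      integral_const_mul, ← hAdef, ← hBdef]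
    ring
  have hψnn : 0 ≤ᵐ[volume.restrict (Set.Ioi (0 : ℝ))] ψ := by
    filter_upwards [ae_restrict_mem measurableSet_Ioi] with t ht
    have h3 : (0 : ℝ) < t := ht
    exact add_nonneg (mul_nonneg hl.le (div_nonneg (by positivity) h3.le))
      (mul_nonneg (by positivity) (div_nonneg (by positivity) h3.le))
  have hgc : ContinuousOn g (Set.Ioi 0) := hg.continuousOn
  have hg'c : ContinuousOn (deriv g) (Set.Ioi 0) :=
    hg.continuousOn_deriv_of_isOpen isOpen_Ioi le_rfl
  set D : ℝ → ℝ := fun t => 2 * (inner ℝ (g t) (deriv g t) : ℝ) with hDdef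
  have hDc : ContinuousOn D (Set.Ioi 0) := continuousOn_const.mul (hgc.inner hg'c)
  -- there are points `x > y` where `‖g x‖²` is small
  have hx : ∀ δ : ℝ, 0 < δ → ∃ x, y < x ∧ ‖g x‖ ^ 2 < δ := by
    intro δ hδ
    by_contra hcon
    push_neg at hcon
    have h1 : IntegrableOn (fun t : ℝ => ‖g t‖ ^ 2 / t) (Set.Ioi y) :=
      hA.mono_set (Set.Ioi_subset_Ioi hy.le)
    have h2 : IntegrableOn (fun t : ℝ => δ / t) (Set.Ioi y) := by
      apply Integrable.mono' h1
      · exact (continuousOn_const.div continuousOn_id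
          (fun t ht => ne_of_gt (lt_trans hy ht))).aestronglyMeasurable measurableSet_Ioi
      · filter_upwards [ae_restrict_mem measurableSet_Ioi] with t ht
        have h3 : 0 < t := lt_trans hy ht
        rw [Real.norm_eq_abs, abs_of_nonneg (by positivity)]
        exact (div_le_div_iff_of_pos_right h3).mpr (hcon t ht)
    have h4 : IntegrableOn (fun t : ℝ => t ^ (-1 : ℝ)) (Set.Ioi y) := by
      have h5 : IntegrableOn (fun t : ℝ => (1 / δ) * (δ / t)) (Set.Ioi y) := h2.const_mul (1 / δ)
      apply h5.congr_fun ?_ measurableSet_Ioi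
      intro t ht
      have h3 : 0 < t := lt_trans hy ht
      show 1 / δ * (δ / t) = t ^ (-1 : ℝ)
      rw [Real.rpow_neg_one]
      field_simp
    rw [integrableOn_Ioi_rpow_iff hy] at h4
    linarith
  -- main estimate with an extra `δ`
  have main : ∀ δ : ℝ, 0 < δ → ‖g y‖ ^ 2 ≤ δ + (l * A + B / l) := by
    intro δ hδ
    obtain ⟨x, hyx, hgx⟩ := hx δ hδ
    have hIcc : Set.Icc y x ⊆ Set.Ioi 0 := fun t ht => lt_of_lt_of_le hy ht.1
    have hD : ∀ t ∈ Set.uIcc y x, HasDerivAt (fun s => ‖g s‖ ^ 2) (D t) t := by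
      intro t ht
      rw [Set.uIcc_of_le hyx.le] at ht
      have h3 : (0 : ℝ) < t := lt_of_lt_of_le hy ht.1
      have hdiff : DifferentiableAt ℝ g t :=
        (hg.contDiffAt (isOpen_Ioi.mem_nhds h3)).differentiableAt one_ne_zero
      exact hdiff.hasDerivAt.norm_sq
    have hDint : IntervalIntegrable D volume y x :=
      (hDc.mono hIcc).intervalIntegrable_of_Icc hyx.le
    have hFTC : ∫ t in y..x, D t = ‖g x‖ ^ 2 - ‖g y‖ ^ 2 :=
      intervalIntegral.integral_eq_sub_of_hasDerivAt hD hDint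
    have hψiint : IntervalIntegrable ψ volume y x := by
      apply IntegrableOn.intervalIntegrable
      rw [Set.uIcc_of_le hyx.le]
      exact hψint.mono_set hIcc
    have hbound : ∀ t ∈ Set.Icc y x, |D t| ≤ ψ t := by
      intro t ht
      have h3 : (0 : ℝ) < t := lt_of_lt_of_le hy ht.1
      have h4 : |(inner ℝ (g t) (deriv g t) : ℝ)| ≤ ‖g t‖ * ‖deriv g t‖ :=
        abs_real_inner_le_norm _ _
      have h5 : ‖(t : ℂ) * deriv g t‖ = t * ‖deriv g t‖ := by
        rw [norm_mul, Complex.norm_real, Real.norm_eq_abs, abs_of_pos h3]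
      have ha : (0 : ℝ) ≤ ‖g t‖ := norm_nonneg _
      have hb : (0 : ℝ) ≤ ‖deriv g t‖ := norm_nonneg _
      have habs : |D t| ≤ 2 * (‖g t‖ * ‖deriv g t‖) := by
        simp only [hDdef]
        rw [abs_mul, abs_two]
        nlinarith [h4]
      refine habs.trans ?_
      have harith : ∀ a b : ℝ, 0 ≤ a → 0 ≤ b →
          2 * (a * b) ≤ l * (a ^ 2 / t) + 1 / l * ((t * b) ^ 2 / t) := by
        intro a b ha' hb'
        have e : (t * b) ^ 2 / t = t * b ^ 2 := by
          field_simp [h3.ne']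
        have e2 : l * (a ^ 2 / t) + 1 / l * (t * b ^ 2) = (l * a ^ 2) / t + (t * b ^ 2) / l := by
          field_simp
        rw [e, e2, div_add_div _ _ (ne_of_gt h3) (ne_of_gt hl), le_div_iff₀ (by positivity)]
        nlinarith [sq_nonneg (l * a - t * b)]
      have := harith ‖g t‖ ‖deriv g t‖ ha hb
      simp only [hψdef]
      rw [h5]
      exact this
    have c2 : |∫ t in y..x, D t| ≤ ∫ t in y..x, |D t| :=
      intervalIntegral.abs_integral_le_integral_abs hyx.le
    have hDabsint : IntervalIntegrable (fun t => |D t|) volume y x :=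
      ((hDc.mono hIcc).abs).intervalIntegrable_of_Icc hyx.le
    have c3 : ∫ t in y..x, |D t| ≤ ∫ t in y..x, ψ t :=
      intervalIntegral.integral_mono_on hyx.le hDabsint hψiint hbound
    have c4 : ∫ t in y..x, ψ t ≤ ∫ t in Set.Ioi (0 : ℝ), ψ t := by
      rw [intervalIntegral.integral_of_le hyx.le]
      have hsub : Set.Ioc y x ⊆ Set.Ioi 0 := fun t ht => lt_trans hy ht.1
      exact setIntegral_mono_set hψint hψnn hsub.eventuallyLE
    have hle : - ∫ t in y..x, D t ≤ |∫ t in y..x, D t| := neg_le_abs _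
    have : ‖g y‖ ^ 2 = ‖g x‖ ^ 2 - ∫ t in y..x, D t := by rw [hFTC]; ring
    rw [this]
    have := hψval
    linarith
  by_contra hcon
  push_neg at hcon
  have hδ : 0 < (‖g y‖ ^ 2 - (l * A + B / l)) / 2 := by linarith
  have := main _ hδ
  linarith

theorem stmt15 (ε : ℝ) (hε0 : 0 < ε) (hε1 : ε < 1) :
    ∃ C : ℝ, 0 < C ∧
      ∀ g : ℝ → ℂ, ContDiffOn ℝ 1 g (Set.Ioi 0) →
        IntegrableOn (fun t : ℝ => ‖g t‖ ^ 2 / t) (Set.Ioi 0) →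
        IntegrableOn (fun t : ℝ => ‖(t : ℂ) * deriv g t‖ ^ 2 / t) (Set.Ioi 0) →
        ∀ y : ℝ, 0 < y →
          2 * ‖g y‖ ≤
            Real.sqrt (∫ t in Set.Ioi (0 : ℝ), ‖g t‖ ^ 2 / t) +
              C * Real.sqrt (∫ t in Set.Ioi (0 : ℝ), ‖(t : ℂ) * deriv g t‖ ^ 2 / t) *
                max (y ^ ε) (y ^ (-ε)) := by
  refine ⟨2, two_pos, ?_⟩
  intro g hg hA hB y hy
  set A := ∫ t in Set.Ioi (0 : ℝ), ‖g t‖ ^ 2 / t with hAdef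
  set B := ∫ t in Set.Ioi (0 : ℝ), ‖(t : ℂ) * deriv g t‖ ^ 2 / t with hBdef
  have key : ∀ l : ℝ, 0 < l → ‖g y‖ ^ 2 ≤ l * A + B / l := fun l hl =>
    stmt15_aux g hg hA hB y hy l hl
  clear_value A B
  have hA0 : 0 ≤ A := by
    rw [hAdef]
    exact setIntegral_nonneg measurableSet_Ioi fun t ht => div_nonneg (by positivity) (le_of_lt ht)
  have hB0 : 0 ≤ B := by
    rw [hBdef]
    exact setIntegral_nonneg measurableSet_Ioi fun t ht => div_nonneg (by positivity) (le_of_lt ht)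
  have hn0 : (0 : ℝ) ≤ ‖g y‖ := norm_nonneg _
  set u := Real.sqrt A with hudef
  set v := Real.sqrt B with hvdef
  clear_value u v
  have hu0 : 0 ≤ u := by rw [hudef]; exact Real.sqrt_nonneg _
  have hv0 : 0 ≤ v := by rw [hvdef]; exact Real.sqrt_nonneg _
  have su : u * u = A := by rw [hudef]; exact Real.mul_self_sqrt hA0
  have sv : v * v = B := by rw [hvdef]; exact Real.mul_self_sqrt hB0
  have key2 : ‖g y‖ ^ 2 ≤ 2 * u * v := by
    rcases eq_or_lt_of_le hA0 with hAz | hApos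
    · -- A = 0
      by_contra hcon
      push_neg at hcon
      have hgy : 0 < ‖g y‖ ^ 2 := lt_of_le_of_lt (by positivity) hcon
      have hl : 0 < (B + 1) / ‖g y‖ ^ 2 := by positivity
      have h := key _ hl
      rw [← hAz] at h
      have : B / ((B + 1) / ‖g y‖ ^ 2) = B * ‖g y‖ ^ 2 / (B + 1) := by
        field_simp
      rw [mul_zero, zero_add, this] at h
      have hlt : B * ‖g y‖ ^ 2 / (B + 1) < ‖g y‖ ^ 2 := by
        rw [div_lt_iff₀ (by linarith)]
        nlinarith
      linarith
    rcases eq_or_lt_of_le hB0 with hBz | hBpos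
    · -- B = 0
      by_contra hcon
      push_neg at hcon
      have hgy : 0 < ‖g y‖ ^ 2 := lt_of_le_of_lt (by positivity) hcon
      have hl : 0 < ‖g y‖ ^ 2 / (2 * (A + 1)) := by positivity
      have h := key _ hl
      rw [← hBz] at h
      have hlt : ‖g y‖ ^ 2 / (2 * (A + 1)) * A < ‖g y‖ ^ 2 := by
        rw [div_mul_eq_mul_div, div_lt_iff₀ (by linarith)]
        nlinarith
      rw [zero_div, add_zero] at h
      linarith
    · -- A > 0, B > 0
      have hupos : 0 < u := by rw [hudef]; exact Real.sqrt_pos.mpr hApos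
      have hvpos : 0 < v := by rw [hvdef]; exact Real.sqrt_pos.mpr hBpos
      have hl : 0 < v / u := by positivity
      have h := key _ hl
      have e1 : v / u * A = u * v := by
        rw [div_mul_eq_mul_div, div_eq_iff (ne_of_gt hupos)]
        linear_combination (-v) * su
      have e2 : B / (v / u) = u * v := by
        rw [div_div_eq_mul_div, div_eq_iff (ne_of_gt hvpos)]
        linear_combination (-u) * sv
      rw [e1, e2] at h
      linarith
  have hmax : 1 ≤ max (y ^ ε) (y ^ (-ε)) := by
    have hprod : y ^ ε * y ^ (-ε) = 1 := by
      rw [← Real.rpow_add hy]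
      simp
    have hp1 : 0 < y ^ ε := Real.rpow_pos_of_pos hy ε
    have hp2 : 0 < y ^ (-ε) := Real.rpow_pos_of_pos hy (-ε)
    rcases le_total 1 (y ^ ε) with h | h
    · exact le_max_of_le_left h
    · refine le_max_of_le_right ?_
      nlinarith
  have h2 : (2 * ‖g y‖) ^ 2 ≤ (u + 2 * v) ^ 2 := by nlinarith [sq_nonneg (u - 2 * v)]
  have h3 : 2 * ‖g y‖ ≤ u + 2 * v := by
    calc 2 * ‖g y‖ = Real.sqrt ((2 * ‖g y‖) ^ 2) := (Real.sqrt_sq (by positivity)).symm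
      _ ≤ Real.sqrt ((u + 2 * v) ^ 2) := Real.sqrt_le_sqrt h2
      _ = u + 2 * v := Real.sqrt_sq (by positivity)
  have h4 : 2 * v ≤ 2 * v * max (y ^ ε) (y ^ (-ε)) := by
    nlinarith
  linarith
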